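/- A classical noncrossing partition of the set {1, ..., n+1} corresponds to a positive noncrossing partition of the Coxeter group of type A_n (i.e., one not contained in any proper standard parabolic subgroup) if and only if the elements 1 and n+1 lie in the same block of the partition. -/

import Mathlib

open Equiv Equiv.Perm Finset

/-- The absolute length of a permutation: the minimal number of transpositions
(= reflections of the symmetric group) whose product is the permutation. -/
noncomputable def absLength {α : Type*} [DecidableEq α] [Fintype α] (π : Equiv.Perm α) : ℕ :=
  sInf {k | ∃ l : List (Equiv.Perm α), l.length = k ∧ (∀ t ∈ l, t.IsSwap) ∧ l.prod = π}

/-- The absolute order on the symmetric group: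
`u ≤_T v` iff `l_T v = l_T u + l_T (u⁻¹ v)`. -/
def absLe {α : Type*} [DecidableEq α] [Fintype α] (u v : Equiv.Perm α) : Prop :=
  absLength v = absLength u + absLength (u⁻¹ * v)

/-- The simple generators `sᵢ = (i, i+1)` of the symmetric group `S_{n+1}`,
viewed as the Coxeter group of type `Aₙ`. -/
def simpleGen (n : ℕ) (i : Fin n) : Equiv.Perm (Fin (n + 1)) :=
  Equiv.swap i.castSucc i.succ

/-- The Coxeter element `c = s₁ s₂ ⋯ sₙ` of `S_{n+1}`. -/
def coxeterA (n : ℕ) : Equiv.Perm (Fin (n + 1)) :=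
  (List.ofFn fun i : Fin n => simpleGen n i).prod

theorem Equiv.Perm.apply_inv_self {β : Type*} (f : Equiv.Perm β) (x : β) : f (f⁻¹ x) = x :=
  f.apply_symm_apply x

theorem Equiv.Perm.inv_apply_self {β : Type*} (f : Equiv.Perm β) (x : β) : f⁻¹ (f x) = x :=
  f.symm_apply_apply x

namespace NCAux
variable {α : Type*} [DecidableEq α] [Fintype α] [LinearOrder α]
set_option linter.unusedSectionVars false

lemma sameCycle_nat {σ : Perm α} {x y : α} (h : σ.SameCycle x y) : ∃ k : ℕ, (σ ^ k) x = y := by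
  obtain ⟨i, _, hi⟩ := h.exists_pow_eq'
  exact ⟨i, hi⟩

lemma eq_of_fixed {σ : Perm α} {j z : α} (hj : σ j = j) (h : σ.SameCycle j z) : z = j := by
  obtain ⟨k, hk⟩ := sameCycle_nat h
  rw [pow_apply_eq_self_of_apply_eq_self hj] at hk
  exact hk.symm

lemma sc_of_pow {σ : Perm α} {y z : α} (m : ℕ) (h : (σ ^ m) y = z) : σ.SameCycle y z :=
  ⟨(m : ℤ), by rw [zpow_natCast, h]⟩

/-- The orbit of `y` under `σ` as a finset. -/
def orbSet (σ : Perm α) (y : α) : Finset α := univ.filter (σ.SameCycle y ·)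

lemma mem_orbSet {σ : Perm α} {y z : α} : z ∈ orbSet σ y ↔ σ.SameCycle y z := by
  simp [orbSet]

lemma orbSet_nonempty (σ : Perm α) (y : α) : (orbSet σ y).Nonempty :=
  ⟨y, mem_orbSet.2 (SameCycle.refl _ _)⟩

/-- The minimum of the orbit of `y` under `σ`. -/
def mu (σ : Perm α) (y : α) : α := (orbSet σ y).min' (orbSet_nonempty σ y)

lemma sameCycle_mu (σ : Perm α) (y : α) : σ.SameCycle y (mu σ y) :=
  mem_orbSet.1 ((orbSet σ y).min'_mem _)

lemma orbSet_eq {σ : Perm α} {y z : α} (h : σ.SameCycle y z) : orbSet σ y = orbSet σ z := by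
  ext w; simp only [mem_orbSet]
  exact ⟨fun hw => h.symm.trans hw, fun hw => h.trans hw⟩

lemma min'_congr {s t : Finset α} (h : s = t) (hs : s.Nonempty) :
    s.min' hs = t.min' (h ▸ hs) := by subst h; rfl

lemma mu_eq {σ : Perm α} {y z : α} (h : σ.SameCycle y z) : mu σ y = mu σ z := by
  simp only [mu, orbSet_eq h]

lemma mu_le {σ : Perm α} {y z : α} (h : σ.SameCycle y z) : mu σ y ≤ z :=
  Finset.min'_le _ _ (mem_orbSet.2 h)

lemma mu_mu (σ : Perm α) (y : α) : mu σ (mu σ y) = mu σ y :=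
  (mu_eq (sameCycle_mu σ y)).symm

lemma mu_fixed {σ : Perm α} {j : α} (hj : σ j = j) : mu σ j = j :=
  le_antisymm (mu_le (SameCycle.refl _ _)) (by
    have := sameCycle_mu σ j
    rw [eq_of_fixed hj this])

/-- The number of cycles (orbits, including fixed points) of `σ`. -/
def cyc (σ : Perm α) : ℕ := (univ.image (mu σ)).card

lemma cyc_le_card (σ : Perm α) : cyc σ ≤ Fintype.card α := by
  simpa [cyc] using Finset.card_image_le.trans (le_of_eq (by simp))

lemma one_le_cyc [Nonempty α] (σ : Perm α) : 1 ≤ cyc σ := by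
  have : (univ.image (mu σ)).Nonempty := ⟨mu σ (Classical.arbitrary α),
    mem_image_of_mem _ (mem_univ _)⟩
  exact Finset.card_pos.2 this

lemma cyc_one : cyc (1 : Perm α) = Fintype.card α := by
  have hmu : ∀ y : α, mu (1 : Perm α) y = y := fun y => mu_fixed rfl
  have : mu (1 : Perm α) = id := funext hmu
  simp [cyc, this]

lemma cyc_eq_one {σ : Perm α} (y : α) (h : ∀ z, σ.SameCycle y z) : cyc σ = 1 := by
  have himg : univ.image (mu σ) = {mu σ y} := by
    ext w
    rw [Finset.mem_image, Finset.mem_singleton]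
    constructor
    · rintro ⟨z, -, rfl⟩
      exact (mu_eq (h z)).symm
    · rintro rfl
      exact ⟨y, mem_univ y, rfl⟩
  rw [cyc, himg, Finset.card_singleton]

lemma cyc_le_of_refines {σ ρ : Perm α} (h : ∀ y z, ρ.SameCycle y z → σ.SameCycle y z) :
    cyc σ ≤ cyc ρ := by
  apply Finset.card_le_card_of_surjOn (mu σ)
  intro w hw
  rw [Finset.mem_coe, Finset.mem_image] at hw
  obtain ⟨y, -, rfl⟩ := hw
  exact ⟨mu ρ y, Finset.mem_coe.2 (mem_image_of_mem _ (mem_univ y)),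
    (mu_eq (h _ _ (sameCycle_mu ρ y))).symm⟩

lemma cyc_lt_of_refines {σ ρ : Perm α} (h : ∀ y z, ρ.SameCycle y z → σ.SameCycle y z)
    {u v : α} (huv : σ.SameCycle u v) (hnuv : ¬ ρ.SameCycle u v) : cyc σ + 1 ≤ cyc ρ := by
  have hmem : mu ρ u ∈ univ.image (mu ρ) := mem_image_of_mem _ (mem_univ u)
  have hsurj : Set.SurjOn (mu σ) ((univ.image (mu ρ)).erase (mu ρ u)) (univ.image (mu σ)) := by
    intro w hw
    rw [Finset.mem_coe, Finset.mem_image] at hw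
    obtain ⟨y, -, rfl⟩ := hw
    by_cases hy : mu ρ y = mu ρ u
    · refine ⟨mu ρ v, Finset.mem_coe.2 (Finset.mem_erase.2 ⟨?_, mem_image_of_mem _ (mem_univ v)⟩), ?_⟩
      · intro hvu
        have h2 : ρ.SameCycle (mu ρ v) v := (sameCycle_mu ρ v).symm
        rw [hvu] at h2
        exact hnuv ((sameCycle_mu ρ u).trans h2)
      · have h2' : ρ.SameCycle (mu ρ y) u := hy ▸ (sameCycle_mu ρ u).symm
        have h2 : σ.SameCycle y u := h _ _ ((sameCycle_mu ρ y).trans h2')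
        calc mu σ (mu ρ v) = mu σ v := (mu_eq (h _ _ (sameCycle_mu ρ v))).symm
        _ = mu σ u := (mu_eq huv).symm
        _ = mu σ y := (mu_eq h2).symm
    · exact ⟨mu ρ y, Finset.mem_coe.2 (Finset.mem_erase.2 ⟨hy, mem_image_of_mem _ (mem_univ y)⟩),
        (mu_eq (h _ _ (sameCycle_mu ρ y))).symm⟩
  have := Finset.card_le_card_of_surjOn _ hsurj
  rw [Finset.card_erase_of_mem hmem] at this
  have hpos : 1 ≤ (univ.image (mu ρ)).card := Finset.card_pos.2 ⟨_, hmem⟩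
  simp only [cyc]; omega


section Splice
variable {σ : Perm α} {x : α}

lemma splice_fix (σ : Perm α) (x : α) : (Equiv.swap x (σ x) * σ) x = x := by
  simp

/-- Forward orbit tracking for the spliced permutation. -/
lemma splice_pow (hx : σ x ≠ x) {y : α} (hy : y ≠ x) (k : ℕ) :
    ∃ m : ℕ, ((Equiv.swap x (σ x) * σ) ^ k) y = (σ ^ m) y ∧ ((Equiv.swap x (σ x) * σ) ^ k) y ≠ x := by
  induction k with
  | zero => exact ⟨0, rfl, hy⟩
  | succ k ih =>
    obtain ⟨m, hm, hne⟩ := ih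
    rw [hm] at hne
    have hstep : ((Equiv.swap x (σ x) * σ) ^ (k+1)) y = (Equiv.swap x (σ x)) (σ ((σ ^ m) y)) := by
      rw [pow_succ', Equiv.Perm.mul_apply, hm, Equiv.Perm.mul_apply]
    by_cases hz : σ ((σ ^ m) y) = x
    · have h2 : (σ ^ (m+2)) y = σ x := by
        have h3 : (σ ^ (m+2)) y = σ (σ ((σ ^ m) y)) := by
          rw [show m+2 = m+1+1 from rfl, pow_succ', Equiv.Perm.mul_apply, pow_succ',
            Equiv.Perm.mul_apply]
        rw [h3, hz]
      refine ⟨m+2, ?_, ?_⟩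
      · rw [hstep, hz, Equiv.swap_apply_left, h2]
      · rw [hstep, hz, Equiv.swap_apply_left]; exact hx
    · have hz2 : σ ((σ ^ m) y) ≠ σ x := fun h => hne (σ.injective h)
      refine ⟨m+1, ?_, ?_⟩
      · rw [hstep, Equiv.swap_apply_of_ne_of_ne hz hz2, pow_succ', Equiv.Perm.mul_apply]
      · rw [hstep, Equiv.swap_apply_of_ne_of_ne hz hz2]; exact hz
end Splice


section Splice2
variable {σ : Perm α} {x : α}

/-- Converse orbit tracking: every `σ`-orbit point (other than `x`) is reached. -/
lemma splice_pow_rev (hx : σ x ≠ x) {y : α} (hy : y ≠ x) (m : ℕ) (hm : (σ ^ m) y ≠ x) :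
    ∃ k : ℕ, ((Equiv.swap x (σ x) * σ) ^ k) y = (σ ^ m) y := by
  induction m using Nat.strong_induction_on with
  | _ m ih =>
    match m, hm with
    | 0, _ => exact ⟨0, rfl⟩
    | (m+1), hm =>
      by_cases hz : (σ ^ m) y = x
      · -- previous point is x; the one before that maps into x
        have hm1 : 1 ≤ m := by
          rcases Nat.eq_zero_or_pos m with h0 | h
          · subst h0; simp at hz; exact absurd hz hy
          · omega
        obtain ⟨m', rfl⟩ : ∃ m', m = m' + 1 := ⟨m - 1, by omega⟩
        have hprev : σ ((σ ^ m') y) = x := by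
          rw [← Equiv.Perm.mul_apply, ← pow_succ']; exact hz
        have hprevne : (σ ^ m') y ≠ x := by
          intro h; rw [h] at hprev; exact hx hprev
        obtain ⟨k, hk⟩ := ih m' (by omega) hprevne
        refine ⟨k + 1, ?_⟩
        rw [pow_succ', Equiv.Perm.mul_apply, hk, Equiv.Perm.mul_apply, hprev,
          Equiv.swap_apply_left]
        rw [show m' + 1 + 1 = m' + 1 + 1 from rfl, pow_succ', Equiv.Perm.mul_apply, pow_succ',
          Equiv.Perm.mul_apply, hprev]
      · obtain ⟨k, hk⟩ := ih m (by omega) hz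
        have hz2 : σ ((σ ^ m) y) ≠ σ x := by
          intro h; exact hz (σ.injective h)
        have hz3 : σ ((σ ^ m) y) ≠ x := by
          rw [← Equiv.Perm.mul_apply, ← pow_succ']; exact hm
        refine ⟨k + 1, ?_⟩
        rw [pow_succ', Equiv.Perm.mul_apply, hk, Equiv.Perm.mul_apply,
          Equiv.swap_apply_of_ne_of_ne hz3 hz2, pow_succ', Equiv.Perm.mul_apply]

/-- `SameCycle` transfer for the spliced permutation, on points other than `x`. -/
lemma splice_sameCycle (hx : σ x ≠ x) {y z : α} (hy : y ≠ x) (hz : z ≠ x) :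
    (Equiv.swap x (σ x) * σ).SameCycle y z ↔ σ.SameCycle y z := by
  constructor
  · rintro h
    obtain ⟨k, hk⟩ := sameCycle_nat h
    obtain ⟨m, hm, -⟩ := splice_pow hx hy k
    exact sc_of_pow m (by rw [← hm, hk])
  · rintro h
    obtain ⟨m, hm⟩ := sameCycle_nat h
    obtain ⟨k, hk⟩ := splice_pow_rev hx hy m (hm ▸ hz)
    exact sc_of_pow k (by rw [hk, hm])

lemma splice_refines (hx : σ x ≠ x) :
    ∀ y z, (Equiv.swap x (σ x) * σ).SameCycle y z → σ.SameCycle y z := by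
  have hfix : (Equiv.swap x (σ x) * σ) x = x := splice_fix σ x
  intro y z h
  by_cases hy : y = x
  · subst hy
    have := eq_of_fixed hfix h
    rw [this]
  · by_cases hzx : z = x
    · subst hzx
      have := eq_of_fixed hfix h.symm
      rw [this]
    · exact (splice_sameCycle hx hy hzx).1 h

/-- Splitting a cycle: multiplying by `swap x (σ x)` increases the cycle count by one. -/
lemma cyc_splice_ge (hx : σ x ≠ x) : cyc σ + 1 ≤ cyc (Equiv.swap x (σ x) * σ) := by
  refine cyc_lt_of_refines (splice_refines hx) (⟨1, by simp⟩ : σ.SameCycle x (σ x)) ?_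
  intro h
  exact hx (eq_of_fixed (splice_fix σ x) h)

end Splice2

section SwapBound
variable {σ : Perm α} {a b : α}

lemma avoid_pow (hab : ¬ σ.SameCycle a b → True) {y : α}
    (ha : ¬ σ.SameCycle y a) (hb : ¬ σ.SameCycle y b) (k : ℕ) :
    ((Equiv.swap a b * σ) ^ k) y = (σ ^ k) y := by
  induction k with
  | zero => rfl
  | succ k ih =>
    rw [pow_succ', Equiv.Perm.mul_apply, ih, Equiv.Perm.mul_apply]
    have h1 : σ ((σ ^ k) y) ≠ a := fun h => ha ⟨(k : ℤ) + 1, by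
      rw [← h]; rw [show ((k : ℤ) + 1) = ((k+1 : ℕ) : ℤ) by push_cast; ring, zpow_natCast,
        pow_succ', Equiv.Perm.mul_apply]⟩
    have h2 : σ ((σ ^ k) y) ≠ b := fun h => hb ⟨(k : ℤ) + 1, by
      rw [← h]; rw [show ((k : ℤ) + 1) = ((k+1 : ℕ) : ℤ) by push_cast; ring, zpow_natCast,
        pow_succ', Equiv.Perm.mul_apply]⟩
    rw [pow_succ', Equiv.Perm.mul_apply, Equiv.swap_apply_of_ne_of_ne h1 h2]

lemma avoid_sameCycle {y : α} (ha : ¬ σ.SameCycle y a) (hb : ¬ σ.SameCycle y b) {z : α} :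
    σ.SameCycle y z → (Equiv.swap a b * σ).SameCycle y z := by
  intro h
  obtain ⟨m, hm⟩ := sameCycle_nat h
  exact sc_of_pow m (by rw [avoid_pow (fun _ => trivial) ha hb, hm])

lemma avoid_sameCycle' {y : α} (ha : ¬ σ.SameCycle y a) (hb : ¬ σ.SameCycle y b) {z : α} :
    (Equiv.swap a b * σ).SameCycle y z → σ.SameCycle y z := by
  intro h
  obtain ⟨m, hm⟩ := sameCycle_nat h
  rw [avoid_pow (fun _ => trivial) ha hb] at hm
  exact sc_of_pow m hm

lemma avoid_avoid {y : α} (ha : ¬ σ.SameCycle y a) (hb : ¬ σ.SameCycle y b) :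
    ¬ (Equiv.swap a b * σ).SameCycle y a ∧ ¬ (Equiv.swap a b * σ).SameCycle y b :=
  ⟨fun h => ha (avoid_sameCycle' ha hb h), fun h => hb (avoid_sameCycle' ha hb h)⟩

/-- Multiplying by any swap decreases the cycle count by at most one. -/
lemma cyc_le_swap_mul_add_one (σ : Perm α) (a b : α) :
    cyc σ ≤ cyc (Equiv.swap a b * σ) + 1 := by
  rcases eq_or_ne a b with rfl | hab
  · simp only [Equiv.swap_self]
    have : (Equiv.refl α : Perm α) * σ = σ := by ext z; simp
    rw [this]; omega
  set ρ := Equiv.swap a b * σ with hρ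
  have hσρ : Equiv.swap a b * ρ = σ := by
    rw [hρ, ← mul_assoc, Equiv.swap_mul_self, one_mul]
  -- the "avoiding" set
  set A : Finset α := univ.filter (fun y => ¬ σ.SameCycle y a ∧ ¬ σ.SameCycle y b) with hA
  have hmuA : ∀ y ∈ A, mu σ y = mu ρ y := by
    intro y hy
    rw [hA, mem_filter] at hy
    have h1 := hy.2.1; have h2 := hy.2.2
    have : orbSet σ y = orbSet ρ y := by
      ext w; simp only [mem_orbSet]
      exact ⟨fun h => avoid_sameCycle h1 h2 h, fun h => avoid_sameCycle' h1 h2 h⟩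
    simp only [mu, this]
  have himg : A.image (mu σ) = A.image (mu ρ) := by
    apply Finset.image_congr
    intro y hy; exact hmuA y hy
  -- upper bound for cyc σ
  have hup : cyc σ ≤ (A.image (mu σ)).card + 2 := by
    have hsub : univ.image (mu σ) ⊆ (A.image (mu σ)) ∪ {mu σ a, mu σ b} := by
      intro w hw
      rw [Finset.mem_image] at hw
      obtain ⟨y, -, rfl⟩ := hw
      by_cases hy : y ∈ A
      · exact Finset.mem_union_left _ (mem_image_of_mem _ hy)
      · rw [hA, mem_filter] at hy
        push_neg at hy
        have hy2 := hy (mem_univ y)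
        apply Finset.mem_union_right
        by_cases h1 : σ.SameCycle y a
        · simp [mu_eq h1]
        · simp [mu_eq (hy2 h1)]
    calc cyc σ ≤ ((A.image (mu σ)) ∪ {mu σ a, mu σ b}).card := Finset.card_le_card hsub
      _ ≤ (A.image (mu σ)).card + ({mu σ a, mu σ b} : Finset α).card := Finset.card_union_le _ _
      _ ≤ (A.image (mu σ)).card + 2 := by
          have : ({mu σ a, mu σ b} : Finset α).card ≤ 2 := Finset.card_insert_le _ _ |>.trans (by simp)
          omega
  -- lower bound for cyc ρ
  have hlow : (A.image (mu ρ)).card + 1 ≤ cyc ρ := by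
    have hnotin : mu ρ a ∉ A.image (mu ρ) := by
      rw [Finset.mem_image]
      rintro ⟨y, hy, hyeq⟩
      rw [hA, mem_filter] at hy
      have hav := avoid_avoid hy.2.1 hy.2.2
      apply hav.1
      have h2 : ρ.SameCycle (mu ρ y) a := by rw [hyeq]; exact (sameCycle_mu ρ a).symm
      exact (sameCycle_mu ρ y).trans h2
    have hsub : insert (mu ρ a) (A.image (mu ρ)) ⊆ univ.image (mu ρ) := by
      intro w hw
      rcases Finset.mem_insert.1 hw with rfl | hw
      · exact mem_image_of_mem _ (mem_univ a)
      · rw [Finset.mem_image] at hw ⊢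
        obtain ⟨y, -, rfl⟩ := hw
        exact ⟨y, mem_univ y, rfl⟩
    calc (A.image (mu ρ)).card + 1 = (insert (mu ρ a) (A.image (mu ρ))).card :=
          (Finset.card_insert_of_notMem hnotin).symm
      _ ≤ cyc ρ := Finset.card_le_card hsub
  calc cyc σ ≤ (A.image (mu σ)).card + 2 := hup
    _ = (A.image (mu ρ)).card + 2 := by rw [himg]
    _ ≤ cyc ρ + 1 := by omega

/-- Splitting a cycle: exact count. -/
lemma cyc_splice (hx : σ x ≠ x) : cyc (Equiv.swap x (σ x) * σ) = cyc σ + 1 := by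
  have h1 := cyc_splice_ge hx
  have h2 : cyc (Equiv.swap x (σ x) * σ) ≤ cyc σ + 1 := by
    have := cyc_le_swap_mul_add_one (Equiv.swap x (σ x) * σ) x (σ x)
    rwa [← mul_assoc, Equiv.swap_mul_self, one_mul] at this
  omega

/-- Merging two cycles via a fixed point: exact count. -/
lemma cyc_merge {j u : α} (hj : σ j = j) (hu : u ≠ j) :
    cyc σ = cyc (Equiv.swap u j * σ) + 1 := by
  set ρ := Equiv.swap u j * σ with hρ
  have hρj : ρ j = u := by rw [hρ]; simp [Equiv.Perm.mul_apply, hj]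
  have hρjne : ρ j ≠ j := by rw [hρj]; exact hu
  have heq : Equiv.swap j (ρ j) * ρ = σ := by
    rw [hρj, Equiv.swap_comm, hρ, ← mul_assoc, Equiv.swap_mul_self, one_mul]
  have h4 := cyc_splice hρjne
  rw [heq] at h4
  exact h4

end SwapBound


section AbsLen
variable {σ : Perm α}

lemma cyc_lt_card_of_ne_one {x : α} (hx : σ x ≠ x) : cyc σ + 1 ≤ Fintype.card α := by
  set w := max x (σ x) with hw
  have hscw : σ.SameCycle x w := by
    rcases max_cases x (σ x) with ⟨h1, -⟩ | ⟨h1, -⟩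
    · rw [hw, h1]
    · rw [hw, h1]; exact ⟨1, by simp⟩
  have hmuw : mu σ w < w := by
    have h1 : mu σ w = mu σ x := (mu_eq hscw).symm
    have h2 : mu σ x ≤ x := mu_le (SameCycle.refl _ _)
    have h3 : mu σ x ≤ σ x := mu_le ⟨1, by simp⟩
    rw [h1]
    rcases lt_or_gt_of_ne hx with h | h
    · exact lt_of_le_of_lt h3 (by rw [hw]; exact lt_max_iff.2 (Or.inl h))
    · exact lt_of_le_of_lt h2 (by rw [hw]; exact lt_max_iff.2 (Or.inr h))
  have hnot : w ∉ univ.image (mu σ) := by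
    rw [Finset.mem_image]
    rintro ⟨z, -, hz⟩
    have h5 : mu σ w = w := by rw [← hz, mu_mu]
    exact absurd h5 (ne_of_lt hmuw)
  have hsub : univ.image (mu σ) ⊆ univ.erase w :=
    fun z hz => Finset.mem_erase.2 ⟨fun h => hnot (h ▸ hz), mem_univ z⟩
  have h6 := Finset.card_le_card hsub
  rw [Finset.card_erase_of_mem (mem_univ w), Finset.card_univ] at h6
  have h7 : 1 ≤ Fintype.card α := Fintype.card_pos_iff.2 ⟨x⟩
  have h8 : cyc σ ≤ Fintype.card α - 1 := h6
  omega

lemma exists_swap_list (σ : Perm α) : ∃ l : List (Perm α),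
    (∀ t ∈ l, Equiv.Perm.IsSwap t) ∧ l.prod = σ ∧ l.length + cyc σ = Fintype.card α := by
  generalize hd : Fintype.card α - cyc σ = d
  induction d generalizing σ with
  | zero =>
    have hone : ∀ x, σ x = x := by
      intro x; by_contra h
      have := cyc_lt_card_of_ne_one h
      have := cyc_le_card σ
      omega
    have : σ = 1 := Equiv.ext hone
    subst this
    exact ⟨[], by simp, by simp, by simp [cyc_one]⟩
  | succ d ih =>
    have hne : ∃ x, σ x ≠ x := by
      by_contra h
      push_neg at h
      have : σ = 1 := Equiv.ext h
      rw [this, cyc_one] at hd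
      omega
    obtain ⟨x, hx⟩ := hne
    set ρ := Equiv.swap x (σ x) * σ with hρ
    have hcyc : cyc ρ = cyc σ + 1 := cyc_splice hx
    have hlt := cyc_lt_card_of_ne_one hx
    obtain ⟨l, hsw, hprod, hlen⟩ := ih ρ (by omega)
    refine ⟨Equiv.swap x (σ x) :: l, ?_, ?_, ?_⟩
    · intro t ht
      rcases List.mem_cons.1 ht with rfl | ht
      · exact ⟨x, σ x, Ne.symm hx, rfl⟩
      · exact hsw t ht
    · rw [List.prod_cons, hprod, hρ, ← mul_assoc, Equiv.swap_mul_self, one_mul]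
    · simp only [List.length_cons]; omega

lemma card_le_cyc_add_length :
    ∀ l : List (Perm α), (∀ t ∈ l, Equiv.Perm.IsSwap t) →
      Fintype.card α ≤ cyc l.prod + l.length := by
  intro l
  induction l with
  | nil => intro _; simp [cyc_one]
  | cons t l ih =>
    intro h
    obtain ⟨a, b, hab, ht⟩ := h t List.mem_cons_self
    have h1 := ih (fun t' ht' => h t' (List.mem_cons_of_mem _ ht'))
    have h2 := cyc_le_swap_mul_add_one l.prod a b
    rw [List.prod_cons, ht]
    simp only [List.length_cons]
    omega

lemma absLength_add_cyc (σ : Perm α) : absLength σ + cyc σ = Fintype.card α := by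
  obtain ⟨l, hsw, hprod, hlen⟩ := exists_swap_list σ
  have hub : absLength σ ≤ l.length := Nat.sInf_le ⟨l, rfl, hsw, hprod⟩
  have hne : {k | ∃ l : List (Perm α), l.length = k ∧ (∀ t ∈ l, t.IsSwap) ∧ l.prod = σ}.Nonempty :=
    ⟨l.length, l, rfl, hsw, hprod⟩
  obtain ⟨l', hlen', hsw', hprod'⟩ := Nat.sInf_mem hne
  have hlb := card_le_cyc_add_length l' hsw'
  rw [hprod'] at hlb
  have : absLength σ = l'.length := hlen'.symm
  omega

end AbsLen


section Coxeter

lemma prefix_prod (n : ℕ) : ∀ (k : ℕ) (hk : k ≤ n) (x : Fin (n+1)),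
    (((List.ofFn fun i : Fin k => simpleGen n (Fin.castLE hk i)).prod) x).val =
      if x.val < k then x.val + 1 else if x.val = k then 0 else x.val := by
  intro k
  induction k with
  | zero =>
    intro hk x
    simp only [List.ofFn_zero, List.prod_nil, Equiv.Perm.one_apply]
    split_ifs <;> omega
  | succ k ih =>
    intro hk x
    have hkn : k ≤ n := by omega
    have hkn' : k < n := hk
    have hsplit : (List.ofFn fun i : Fin (k+1) => simpleGen n (Fin.castLE hk i))
        = (List.ofFn fun i : Fin k => simpleGen n (Fin.castLE hkn i))
          ++ [simpleGen n (Fin.castLE hk (Fin.last k))] := by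
      rw [List.ofFn_succ', List.concat_eq_append]
      congr 1
    rw [hsplit, List.prod_append, List.prod_singleton, Equiv.Perm.mul_apply]
    set j : Fin n := Fin.castLE hk (Fin.last k) with hj
    have hcs : (j.castSucc : ℕ) = k := rfl
    have hsu : (j.succ : ℕ) = k + 1 := rfl
    by_cases h1 : x.val = k
    · have hx : simpleGen n j x = j.succ := by
        rw [show x = j.castSucc from Fin.ext (by rw [h1, hcs]), simpleGen,
          Equiv.swap_apply_left]
      rw [hx, ih hkn j.succ, hsu]
      split_ifs <;> omega
    · by_cases h2 : x.val = k + 1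
      · have hx : simpleGen n j x = j.castSucc := by
          rw [show x = j.succ from Fin.ext (by rw [h2, hsu]), simpleGen,
            Equiv.swap_apply_right]
        rw [hx, ih hkn j.castSucc, hcs]
        split_ifs <;> omega
      · have hx : simpleGen n j x = x := by
          rw [simpleGen]
          exact Equiv.swap_apply_of_ne_of_ne (fun h => h1 (by rw [h, hcs]))
            (fun h => h2 (by rw [h, hsu]))
        rw [hx, ih hkn x]
        split_ifs <;> omega

lemma coxeterA_val (n : ℕ) (x : Fin (n+1)) :
    ((coxeterA n) x).val = if x.val < n then x.val + 1 else 0 := by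
  have h := prefix_prod n n le_rfl x
  have he : (List.ofFn fun i : Fin n => simpleGen n (Fin.castLE le_rfl i))
      = (List.ofFn fun i : Fin n => simpleGen n i) := by
    congr 1
  rw [he] at h
  rw [coxeterA, h]
  have := x.isLt
  split_ifs <;> omega

lemma coxeterA_pow (n : ℕ) : ∀ (k : ℕ), k ≤ n → (((coxeterA n) ^ k) 0).val = k := by
  intro k
  induction k with
  | zero => intro _; simp
  | succ k ih =>
    intro hk
    rw [pow_succ', Equiv.Perm.mul_apply, coxeterA_val]
    rw [ih (by omega)]
    split_ifs <;> omega

lemma coxeterA_sameCycle (n : ℕ) (z : Fin (n+1)) : (coxeterA n).SameCycle 0 z := by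
  refine sc_of_pow z.val (Fin.ext ?_)
  rw [coxeterA_pow n z.val (by omega)]

lemma cyc_coxeterA (n : ℕ) : cyc (coxeterA n) = 1 :=
  cyc_eq_one 0 (coxeterA_sameCycle n)

lemma coxeterA_ne (n : ℕ) (hn : 1 ≤ n) (x : Fin (n+1)) : (coxeterA n) x ≠ x := by
  intro h
  have := coxeterA_val n x
  rw [h] at this
  have := x.isLt
  split_ifs at * <;> omega

lemma count_of_absLe {n : ℕ} {π : Perm (Fin (n+1))} (h : absLe π (coxeterA n)) :
    cyc π + cyc (π⁻¹ * coxeterA n) = n + 2 := by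
  have h1 := absLength_add_cyc π
  have h2 := absLength_add_cyc (π⁻¹ * coxeterA n)
  have h3 := absLength_add_cyc (coxeterA n)
  rw [Fintype.card_fin] at h1 h2 h3
  have h4 := cyc_coxeterA n
  rw [absLe] at h
  omega

end Coxeter


section Deletion
variable {m : ℕ}

lemma succAbove_val (p : Fin (m+2)) (x : Fin (m+1)) :
    (p.succAbove x).val = if x.val < p.val then x.val else x.val + 1 := by
  rcases lt_or_ge (x.castSucc) p with h | h
  · rw [Fin.succAbove_of_castSucc_lt p x h]
    have : x.val < p.val := by
      have := h
      rw [Fin.lt_def] at this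
      simpa using this
    rw [if_pos this]
    simp
  · rw [Fin.succAbove_of_le_castSucc p x h]
    have : ¬ x.val < p.val := by
      rw [Fin.le_def] at h
      simp at h
      omega
    rw [if_neg this]
    simp

lemma emb_symm_val (p : Fin (m+2)) (w : {x : Fin (m+2) // x ≠ p}) :
    p.succAbove ((finSuccAboveEquiv p).symm w) = w.val := by
  have h := (finSuccAboveEquiv p).apply_symm_apply w
  rw [finSuccAboveEquiv_apply] at h
  exact congrArg Subtype.val h

/-- Delete the fixed point `p` from the permutation `π`. -/
def del (p : Fin (m+2)) (π : Perm (Fin (m+2))) (hp : π p = p) : Perm (Fin (m+1)) :=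
  (Equiv.permCongr (finSuccAboveEquiv p)).symm
    (π.subtypePerm (fun x => by
      constructor
      · intro hx hc
        exact hx (by rw [hc, hp])
      · intro hx hc
        exact hx (π.injective (by rw [hc, hp]))))

lemma del_spec (p : Fin (m+2)) (π : Perm (Fin (m+2))) (hp : π p = p) (x : Fin (m+1)) :
    p.succAbove (del p π hp x) = π (p.succAbove x) := by
  rw [del, Equiv.permCongr_symm_apply]
  rw [emb_symm_val]
  rw [finSuccAboveEquiv_apply, Equiv.Perm.subtypePerm_apply]

lemma del_spec_pow (p : Fin (m+2)) (π : Perm (Fin (m+2))) (hp : π p = p) (x : Fin (m+1)) :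
    ∀ k : ℕ, p.succAbove (((del p π hp) ^ k) x) = (π ^ k) (p.succAbove x) := by
  intro k
  induction k with
  | zero => rfl
  | succ k ih =>
    rw [pow_succ', Equiv.Perm.mul_apply, del_spec, ih, pow_succ', Equiv.Perm.mul_apply]

lemma del_sameCycle (p : Fin (m+2)) (π : Perm (Fin (m+2))) (hp : π p = p) (x y : Fin (m+1)) :
    (del p π hp).SameCycle x y ↔ π.SameCycle (p.succAbove x) (p.succAbove y) := by
  constructor
  · intro h
    obtain ⟨k, hk⟩ := sameCycle_nat h
    refine sc_of_pow k ?_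
    rw [← del_spec_pow p π hp x k, hk]
  · intro h
    obtain ⟨k, hk⟩ := sameCycle_nat h
    refine sc_of_pow k ?_
    apply Fin.succAbove_right_injective (p := p)
    rw [del_spec_pow p π hp x k, hk]

lemma del_mul (p : Fin (m+2)) (π σ : Perm (Fin (m+2))) (hπ : π p = p) (hσ : σ p = p) :
    del p (π * σ) (by rw [Equiv.Perm.mul_apply, hσ, hπ]) = del p π hπ * del p σ hσ := by
  apply Equiv.ext
  intro x
  apply Fin.succAbove_right_injective (p := p)
  rw [del_spec, Equiv.Perm.mul_apply, Equiv.Perm.mul_apply, del_spec, del_spec]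

lemma del_inv (p : Fin (m+2)) (π : Perm (Fin (m+2))) (hπ : π p = p) :
    del p π⁻¹ (Equiv.Perm.inv_eq_iff_eq.mpr hπ.symm) = (del p π hπ)⁻¹ := by
  apply Equiv.ext
  intro x
  apply Fin.succAbove_right_injective (p := p)
  rw [del_spec]
  have h2 := del_spec p π hπ ((del p π hπ)⁻¹ x)
  rw [Equiv.Perm.apply_inv_self] at h2
  rw [h2, Equiv.Perm.inv_apply_self]

lemma sameCycle_ne_fixed {σ : Perm (Fin (m+2))} {p z : Fin (m+2)} (hp : σ p = p)
    (hz : z ≠ p) : ¬ σ.SameCycle z p := by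
  intro h
  exact hz (eq_of_fixed hp h.symm)

set_option maxHeartbeats 2000000 in
lemma cyc_del (p : Fin (m+2)) (π : Perm (Fin (m+2))) (hp : π p = p) :
    cyc (del p π hp) + 1 = cyc π := by
  set D := del p π hp with hD
  have step1 : ∀ x : Fin (m+1), mu π (p.succAbove x) = p.succAbove (mu D x) := by
    intro x
    apply le_antisymm
    · exact mu_le ((del_sameCycle p π hp x (mu D x)).1 (sameCycle_mu D x))
    · have h1 := sameCycle_mu π (p.succAbove x)
      have hz : mu π (p.succAbove x) ≠ p := by
        intro hzz
        rw [hzz] at h1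
        exact sameCycle_ne_fixed hp (Fin.succAbove_ne p x) h1
      have he : p.succAbove ((finSuccAboveEquiv p).symm ⟨_, hz⟩) = mu π (p.succAbove x) :=
        emb_symm_val p ⟨_, hz⟩
      have h2 : D.SameCycle x ((finSuccAboveEquiv p).symm ⟨_, hz⟩) :=
        (del_sameCycle p π hp x _).2 (by rw [he]; exact h1)
      have h3 : mu D x ≤ (finSuccAboveEquiv p).symm ⟨_, hz⟩ := mu_le h2
      calc p.succAbove (mu D x) ≤ p.succAbove ((finSuccAboveEquiv p).symm ⟨_, hz⟩) :=
            (Fin.strictMono_succAbove p).monotone h3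
        _ = _ := he
  have step3 : univ.image (mu π) = insert p ((univ.image (mu D)).image (p.succAbove)) := by
    ext w
    rw [Finset.mem_image, Finset.mem_insert, Finset.mem_image]
    constructor
    · rintro ⟨y, -, rfl⟩
      by_cases hy : y = p
      · subst hy
        exact Or.inl (mu_fixed hp)
      · right
        set y' := (finSuccAboveEquiv p).symm ⟨y, hy⟩ with hy'
        have he : p.succAbove y' = y := emb_symm_val p ⟨y, hy⟩
        refine ⟨mu D y', ?_, ?_⟩
        · rw [Finset.mem_image]; exact ⟨y', mem_univ _, rfl⟩
        · rw [← step1 y', he]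
    · intro h
      rcases h with hwp | ⟨v, hv, rfl⟩
      · exact ⟨p, mem_univ _, by rw [hwp]; exact mu_fixed hp⟩
      · rw [Finset.mem_image] at hv
        obtain ⟨x, -, rfl⟩ := hv
        exact ⟨p.succAbove x, mem_univ _, step1 x⟩
  have hnotin : p ∉ (univ.image (mu D)).image (p.succAbove) := by
    rw [Finset.mem_image]
    rintro ⟨v, -, hv⟩
    exact Fin.succAbove_ne p v hv
  have hinj : ((univ.image (mu D)).image (p.succAbove)).card = cyc D := by
    rw [Finset.card_image_of_injective _ (Fin.succAbove_right_injective), cyc]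
  have hπc : cyc π = (insert p ((univ.image (mu D)).image (p.succAbove))).card := by
    rw [cyc, step3]
  rw [hπc, Finset.card_insert_of_notMem hnotin, hinj]

set_option maxHeartbeats 2000000 in
lemma del_coxeter (p q : Fin (m+2)) (hq : (coxeterA (m+1)) q = p)
    (hγ : (coxeterA (m+1) * Equiv.swap q p) p = p) :
    del p (coxeterA (m+1) * Equiv.swap q p) hγ = coxeterA m := by
  have hqp : q ≠ p := by
    intro h
    exact coxeterA_ne (m+1) (by omega) q (by rw [hq, h])
  have hqv : (q.val + 1 = p.val ∧ q.val < m + 1) ∨ (q.val = m + 1 ∧ p.val = 0) := by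
    have h1 := coxeterA_val (m+1) q
    rw [hq] at h1
    have h2 := q.isLt
    split_ifs at h1 <;> omega
  apply Equiv.ext
  intro x
  apply Fin.succAbove_right_injective (p := p)
  rw [del_spec]
  apply Fin.ext
  rw [Equiv.Perm.mul_apply]
  set z := p.succAbove x with hz
  have hznep : z ≠ p := Fin.succAbove_ne p x
  have hE : z.val = if x.val < p.val then x.val else x.val + 1 := succAbove_val p x
  have hswap : (Equiv.swap q p z).val = if z.val = q.val then p.val else z.val := by
    by_cases hzq : z = q
    · rw [hzq, Equiv.swap_apply_left, if_pos rfl]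
    · rw [Equiv.swap_apply_of_ne_of_ne hzq hznep,
        if_neg (fun h => hzq (Fin.ext h))]
  have hd1 : ∀ w : Fin (m+2), ((coxeterA (m+1)) w).val = w.val + 1 ∧ w.val < m+1 ∨
      ((coxeterA (m+1)) w).val = 0 ∧ w.val = m+1 := by
    intro w
    have h := coxeterA_val (m+1) w
    have h2 := w.isLt
    by_cases hc : w.val < m+1
    · left; rw [if_pos hc] at h; omega
    · right; rw [if_neg hc] at h; omega
  have hd3 : ((coxeterA m) x).val = x.val + 1 ∧ x.val < m ∨
      ((coxeterA m) x).val = 0 ∧ x.val = m := by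
    have h := coxeterA_val m x
    have h2 := x.isLt
    by_cases hc : x.val < m
    · left; rw [if_pos hc] at h; omega
    · right; rw [if_neg hc] at h; omega
  have hd2 : (p.succAbove ((coxeterA m) x)).val = ((coxeterA m) x).val ∧
        ((coxeterA m) x).val < p.val ∨
      (p.succAbove ((coxeterA m) x)).val = ((coxeterA m) x).val + 1 ∧
        ¬ ((coxeterA m) x).val < p.val := by
    have h := succAbove_val p ((coxeterA m) x)
    by_cases hc : ((coxeterA m) x).val < p.val
    · left; rw [if_pos hc] at h; omega
    · right; rw [if_neg hc] at h; omega
  have hswapd : ((Equiv.swap q p) z).val = p.val ∧ z.val = q.val ∨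
      ((Equiv.swap q p) z).val = z.val ∧ ¬ z.val = q.val := by
    by_cases hc : z.val = q.val
    · left; rw [if_pos hc] at hswap; exact ⟨hswap, hc⟩
    · right; rw [if_neg hc] at hswap; exact ⟨hswap, hc⟩
  have hEd : z.val = x.val ∧ x.val < p.val ∨ z.val = x.val + 1 ∧ ¬ x.val < p.val := by
    by_cases hc : x.val < p.val
    · left; rw [if_pos hc] at hE; exact ⟨hE, hc⟩
    · right; rw [if_neg hc] at hE; exact ⟨hE, hc⟩
  have hx := x.isLt
  have hp2 := p.isLt
  have hq2 := q.isLt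
  have hzp : z.val ≠ p.val := fun h => hznep (Fin.ext h)
  have hqpv : q.val ≠ p.val := fun h => hqp (Fin.ext h)
  have hmain := hd1 ((Equiv.swap q p) z)
  omega

end Deletion


section Counting
variable {α : Type*} [DecidableEq α] [Fintype α] [LinearOrder α]

lemma mu_of_mem_image {σ : Perm α} {x : α} (hx : x ∈ univ.image (mu σ)) : mu σ x = x := by
  rw [Finset.mem_image] at hx
  obtain ⟨y, -, rfl⟩ := hx
  exact mu_mu σ y

/-- Each nontrivial cycle has at least two points: `2 * cyc σ ≤ |α| + #fixedpoints`. -/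
lemma two_mul_cyc_le (σ : Perm α) :
    2 * cyc σ ≤ Fintype.card α + (univ.filter (fun x => σ x = x)).card := by
  set F := univ.filter (fun x => σ x = x) with hF
  set NF := univ.filter (fun x => ¬ σ x = x) with hNF
  set M := univ.image (mu σ) with hM
  set Mnf := M.filter (fun x => ¬ σ x = x) with hMnf
  have hcard2 : 2 * Mnf.card ≤ NF.card := by
    have hmap : ∀ w ∈ Mnf ×ˢ (univ : Finset Bool), (if w.2 then σ w.1 else w.1) ∈ NF := by
      rintro ⟨x, bb⟩ hw
      rw [Finset.mem_product, hMnf, Finset.mem_filter] at hw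
      obtain ⟨⟨-, hxnf⟩, -⟩ := hw
      rcases bb with _ | _
      · simpa [hNF] using hxnf
      · simp only [hNF, Finset.mem_filter, mem_univ, true_and]
        intro h
        exact hxnf (σ.injective h)
    have hinj : Set.InjOn (fun w : α × Bool => if w.2 then σ w.1 else w.1)
        ((Mnf ×ˢ (univ : Finset Bool)) : Finset (α × Bool)) := by
      rintro ⟨x, bx⟩ hx ⟨y, by'⟩ hy heq
      rw [Finset.mem_coe, Finset.mem_product, hMnf, Finset.mem_filter] at hx hy
      obtain ⟨⟨hxM, hxnf⟩, -⟩ := hx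
      obtain ⟨⟨hyM, hynf⟩, -⟩ := hy
      have hxmu : mu σ x = x := mu_of_mem_image hxM
      have hymu : mu σ y = y := mu_of_mem_image hyM
      simp only at heq
      have hcross : ∀ u v : α, mu σ u = u → mu σ v = v → σ v ≠ v → u = σ v → False := by
        intro u v hu hv hvnf huv
        have h1 : σ.SameCycle v u := huv ▸ Equiv.Perm.sameCycle_apply_right.2
          (Equiv.Perm.SameCycle.refl σ v)
        have h2 : mu σ v = mu σ u := mu_eq h1
        rw [hu, hv] at h2
        rw [← h2] at huv
        exact hvnf huv.symm
      cases bx <;> cases by' <;> simp at heq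
      · rw [heq]
      · exact (hcross x y hxmu hymu hynf heq).elim
      · exact (hcross y x hymu hxmu hxnf heq.symm).elim
      · rw [heq]
    have h := Finset.card_le_card_of_injOn _ hmap hinj
    rw [Finset.card_product, Finset.card_univ, Fintype.card_bool] at h
    omega
  have hsplit : (M.filter (fun x => σ x = x)).card + Mnf.card = M.card := by
    rw [hMnf]
    exact Finset.card_filter_add_card_filter_not _
  have h1 : (M.filter (fun x => σ x = x)).card ≤ F.card := by
    apply Finset.card_le_card
    intro x hx
    rw [Finset.mem_filter] at hx ⊢
    exact ⟨mem_univ x, hx.2⟩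
  have h2 : F.card + NF.card = Fintype.card α := by
    rw [hF, hNF, ← Finset.card_univ]
    exact Finset.card_filter_add_card_filter_not _
  have hcycM : cyc σ = M.card := rfl
  omega

end Counting


/-- A crossing in the cycle structure of a permutation. -/
def Crossing {α : Type*} [LT α] (π : Perm α) : Prop :=
  ∃ a b c d : α, a < b ∧ b < c ∧ c < d ∧ π.SameCycle a c ∧ π.SameCycle b d ∧ ¬ π.SameCycle a b

section KeyFP

lemma keyfp (m' : ℕ)
    (IH : ∀ ρ : Perm (Fin (m'+1)),
      cyc ρ + cyc (ρ⁻¹ * coxeterA m') = m' + 2 → Crossing ρ → False)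
    (π : Perm (Fin (m'+2)))
    (hcount : cyc π + cyc (π⁻¹ * coxeterA (m'+1)) = m' + 3)
    (p : Fin (m'+2)) (hp : π p = p) (hcr : Crossing π) : False := by
  obtain ⟨a, b, c, d, hab, hbc, hcd, hac, hbd, hnab⟩ := hcr
  have hmoves : ∀ x y : Fin (m'+2), π.SameCycle x y → x ≠ y → x ≠ p := by
    intro x y hxy hne hxp
    rw [hxp] at hxy
    exact hne (by rw [hxp]; exact (eq_of_fixed hp hxy).symm)
  have ha : a ≠ p := hmoves a c hac (ne_of_lt (hab.trans hbc))
  have hb : b ≠ p := hmoves b d hbd (ne_of_lt (hbc.trans hcd))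
  have hc : c ≠ p := hmoves c a hac.symm (ne_of_gt (hab.trans hbc))
  have hd : d ≠ p := hmoves d b hbd.symm (ne_of_gt (hbc.trans hcd))
  set cbig := coxeterA (m'+1) with hcbig
  set q := cbig⁻¹ p with hqdef
  have hq : cbig q = p := Equiv.Perm.apply_inv_self cbig p
  have hγp : (cbig * Equiv.swap q p) p = p := by
    rw [Equiv.Perm.mul_apply, Equiv.swap_apply_right, hq]
  set τ := π⁻¹ * cbig with hτdef
  have hcne : ∀ z, cbig z ≠ z := coxeterA_ne (m'+1) (by omega)
  have hτp : τ p ≠ p := by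
    intro h
    have h2 : π (τ p) = π p := congrArg π h
    rw [show τ p = π⁻¹ (cbig p) from rfl, Equiv.Perm.apply_inv_self, hp] at h2
    exact hcne p h2
  have hτq : τ q = p := by
    show π⁻¹ (cbig q) = p
    rw [hq]
    exact Equiv.Perm.inv_eq_iff_eq.mpr hp.symm
  have hswapconj : Equiv.swap p (τ p) = τ * Equiv.swap q p * τ⁻¹ := by
    have h := Equiv.swap_apply_apply τ q p
    rw [hτq] at h
    exact h
  have hid : π⁻¹ * (cbig * Equiv.swap q p) = Equiv.swap p (τ p) * τ := by
    rw [hswapconj, hτdef]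
    group
  have hπγp : (π⁻¹ * (cbig * Equiv.swap q p)) p = p := by
    rw [hid]
    show Equiv.swap p (τ p) (τ p) = p
    exact Equiv.swap_apply_right _ _
  have hcyc1 : cyc (π⁻¹ * (cbig * Equiv.swap q p)) = cyc τ + 1 := by
    rw [hid]
    exact cyc_splice hτp
  have hD2 := del_mul p π⁻¹ (cbig * Equiv.swap q p) (Equiv.Perm.inv_eq_iff_eq.mpr hp.symm) hγp
  have hDinv := del_inv p π hp
  have hDcox : del p (cbig * Equiv.swap q p) hγp = coxeterA m' := del_coxeter p q hq hγp
  have hcD1 := cyc_del p π hp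
  have hcD2 := cyc_del p (π⁻¹ * (cbig * Equiv.swap q p)) hπγp
  set D1 := del p π hp with hD1def
  have he : D1⁻¹ * coxeterA m' = del p (π⁻¹ * (cbig * Equiv.swap q p)) hπγp := by
    rw [hD2, hDcox, ← hDinv]
  have hcount1 : cyc D1 + cyc (D1⁻¹ * coxeterA m') = m' + 2 := by
    rw [he]
    omega
  apply IH D1 hcount1
  set a' := (finSuccAboveEquiv p).symm ⟨a, ha⟩ with ha'
  set b' := (finSuccAboveEquiv p).symm ⟨b, hb⟩ with hb'
  set c' := (finSuccAboveEquiv p).symm ⟨c, hc⟩ with hc'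
  set d' := (finSuccAboveEquiv p).symm ⟨d, hd⟩ with hd'
  have hea : p.succAbove a' = a := emb_symm_val p ⟨a, ha⟩
  have heb : p.succAbove b' = b := emb_symm_val p ⟨b, hb⟩
  have hec : p.succAbove c' = c := emb_symm_val p ⟨c, hc⟩
  have hed : p.succAbove d' = d := emb_symm_val p ⟨d, hd⟩
  refine ⟨a', b', c', d', ?_, ?_, ?_, ?_, ?_, ?_⟩
  · rw [← Fin.succAbove_lt_succAbove_iff (p := p), hea, heb]; exact hab
  · rw [← Fin.succAbove_lt_succAbove_iff (p := p), heb, hec]; exact hbc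
  · rw [← Fin.succAbove_lt_succAbove_iff (p := p), hec, hed]; exact hcd
  · rw [del_sameCycle p π hp, hea, hec]; exact hac
  · rw [del_sameCycle p π hp, heb, hed]; exact hbd
  · rw [del_sameCycle p π hp, hea, heb]; exact hnab

end KeyFP

lemma noncross : ∀ (n : ℕ) (π : Perm (Fin (n+1))),
    cyc π + cyc (π⁻¹ * coxeterA n) = n + 2 → Crossing π → False := by
  intro n
  induction n using Nat.strong_induction_on with
  | _ n IH =>
    intro π hcount hcr
    have hn1 : 1 ≤ n := by
      obtain ⟨a, b, c, d, hab, hbc, hcd, -, -, -⟩ := hcr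
      have h1 : a.val < b.val := hab
      have h2 : b.val < c.val := hbc
      have h3 : c.val < d.val := hcd
      have h4 := d.isLt
      omega
    obtain ⟨m', rfl⟩ : ∃ m', n = m' + 1 := ⟨n - 1, by omega⟩
    have IH' : ∀ ρ : Perm (Fin (m'+1)), cyc ρ + cyc (ρ⁻¹ * coxeterA m') = m' + 2 →
        Crossing ρ → False := fun ρ h1 h2 => IH m' (by omega) ρ h1 h2
    by_cases hfix : ∃ p, π p = p
    · obtain ⟨p, hp⟩ := hfix
      exact keyfp m' IH' π hcount p hp hcr
    · push_neg at hfix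
      set τ := π⁻¹ * coxeterA (m'+1) with hτdef
      have hτfix : ∃ j, τ j = j := by
        by_contra hτn
        push_neg at hτn
        have h1 := two_mul_cyc_le π
        have h2 := two_mul_cyc_le τ
        have hFπ : (univ.filter (fun x => π x = x)) = (∅ : Finset (Fin (m'+2))) := by
          rw [Finset.filter_eq_empty_iff]
          intro x _
          exact hfix x
        have hFτ : (univ.filter (fun x => τ x = x)) = (∅ : Finset (Fin (m'+2))) := by
          rw [Finset.filter_eq_empty_iff]
          intro x _
          exact hτn x
        rw [hFπ, Finset.card_empty, Fintype.card_fin] at h1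
        rw [hFτ, Finset.card_empty, Fintype.card_fin] at h2
        omega
      obtain ⟨j, hj⟩ := hτfix
      have hπj : π j = coxeterA (m'+1) j := by
        have h2 : π (τ j) = π j := congrArg π hj
        rw [show τ j = π⁻¹ (coxeterA (m'+1) j) from rfl, Equiv.Perm.apply_inv_self] at h2
        exact h2.symm
      have hπjne : π j ≠ j := hfix j
      have hfix'' : (Equiv.swap j (π j) * π) j = j := splice_fix π j
      have hc1 : cyc (Equiv.swap j (π j) * π) = cyc π + 1 := cyc_splice hπjne
      have hqq : τ ((coxeterA (m'+1))⁻¹ j) = π⁻¹ j := by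
        show π⁻¹ (coxeterA (m'+1) ((coxeterA (m'+1))⁻¹ j)) = π⁻¹ j
        rw [Equiv.Perm.apply_inv_self]
      have hkey : Equiv.swap j (π j)
          = coxeterA (m'+1) * Equiv.swap ((coxeterA (m'+1))⁻¹ j) j * (coxeterA (m'+1))⁻¹ := by
        have h := Equiv.swap_apply_apply (coxeterA (m'+1)) ((coxeterA (m'+1))⁻¹ j) j
        rw [Equiv.Perm.apply_inv_self] at h
        rw [hπj]
        exact h
      have hid2 : (Equiv.swap j (π j) * π)⁻¹ * coxeterA (m'+1)
          = Equiv.swap (π⁻¹ j) j * τ := by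
        have h2 := Equiv.swap_apply_apply τ ((coxeterA (m'+1))⁻¹ j) j
        rw [hqq, hj] at h2
        rw [mul_inv_rev, Equiv.swap_inv, hkey, h2, hτdef]
        group
      have hujne : π⁻¹ j ≠ j := by
        intro h
        have h2 := congrArg π h
        rw [Equiv.Perm.apply_inv_self] at h2
        exact hπjne h2.symm
      have hc2 : cyc τ = cyc (Equiv.swap (π⁻¹ j) j * τ) + 1 := cyc_merge hj hujne
      have hcount'' : cyc (Equiv.swap j (π j) * π)
          + cyc ((Equiv.swap j (π j) * π)⁻¹ * coxeterA (m'+1)) = m' + 3 := by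
        rw [hc1, hid2]
        omega
      -- transfer the crossing
      obtain ⟨a, b, c, d, hab, hbc, hcd, hac, hbd, hnab⟩ := hcr
      have hab' : a.val < b.val := hab
      have hbc' : b.val < c.val := hbc
      have hcd' : c.val < d.val := hcd
      have hd2 := d.isLt
      have hjj1 : π.SameCycle j (π j) :=
        Equiv.Perm.sameCycle_apply_right.2 (Equiv.Perm.SameCycle.refl π j)
      have htrans : ∀ y z : Fin (m'+2), y ≠ j → z ≠ j →
          ((Equiv.swap j (π j) * π).SameCycle y z ↔ π.SameCycle y z) :=
        fun y z hy hz => splice_sameCycle hπjne hy hz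
      have hπjval : (π j).val = if j.val < m'+1 then j.val + 1 else 0 := by
        rw [hπj]
        exact coxeterA_val _ j
      have hcr'' : Crossing (Equiv.swap j (π j) * π) := by
        by_cases hja : a = j
        · subst hja
          -- crossing (π a, b, c, d), noting a < d ≤ last so a.val < m'+1
          have hπjb : π a ≠ b := fun h => hnab (h ▸ hjj1)
          have hπab : (π a).val = a.val + 1 := by
            rw [hπjval, if_pos (by omega)]
          have hbne : b ≠ a := Fin.ne_of_val_ne (by omega)
          have hcne : c ≠ a := Fin.ne_of_val_ne (by omega)
          have hdne : d ≠ a := Fin.ne_of_val_ne (by omega)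
          have hπane : π a ≠ a := hπjne
          refine ⟨π a, b, c, d, ?_, hbc, hcd, ?_, ?_, ?_⟩
          · have hv : (π a).val ≠ b.val := fun h => hπjb (Fin.ext h)
            exact Fin.lt_def.2 (by omega)
          · exact (htrans _ _ hπane hcne).2 (Equiv.Perm.sameCycle_apply_left.2 hac)
          · exact (htrans _ _ hbne hdne).2 hbd
          · intro h
            exact hnab (Equiv.Perm.sameCycle_apply_left.1 ((htrans _ _ hπane hbne).1 h))
        · by_cases hjb : b = j
          · subst hjb
            have hπbc : π b ≠ c := fun h => hnab (hac.trans (h ▸ hjj1).symm)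
            have hπbv : (π b).val = b.val + 1 := by
              rw [hπjval, if_pos (by omega)]
            have hane : a ≠ b := Fin.ne_of_val_ne (by omega)
            have hcne : c ≠ b := Fin.ne_of_val_ne (by omega)
            have hdne : d ≠ b := Fin.ne_of_val_ne (by omega)
            have hπbne : π b ≠ b := hπjne
            refine ⟨a, π b, c, d, ?_, ?_, hcd, ?_, ?_, ?_⟩
            · exact Fin.lt_def.2 (by omega)
            · have hv : (π b).val ≠ c.val := fun h => hπbc (Fin.ext h)
              exact Fin.lt_def.2 (by omega)
            · exact (htrans _ _ hane hcne).2 hac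
            · exact (htrans _ _ hπbne hdne).2 (Equiv.Perm.sameCycle_apply_left.2 hbd)
            · intro h
              exact hnab (Equiv.Perm.sameCycle_apply_right.1 ((htrans _ _ hane hπbne).1 h))
          · by_cases hjc : c = j
            · subst hjc
              have hπcd : π c ≠ d := fun h =>
                hnab ((hac.trans (h ▸ hjj1)).trans hbd.symm)
              have hπcv : (π c).val = c.val + 1 := by
                rw [hπjval, if_pos (by omega)]
              have hane : a ≠ c := Fin.ne_of_val_ne (by omega)
              have hbne : b ≠ c := Fin.ne_of_val_ne (by omega)
              have hdne : d ≠ c := Fin.ne_of_val_ne (by omega)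
              have hπcne : π c ≠ c := hπjne
              refine ⟨a, b, π c, d, hab, ?_, ?_, ?_, ?_, ?_⟩
              · exact Fin.lt_def.2 (by omega)
              · have hv : (π c).val ≠ d.val := fun h => hπcd (Fin.ext h)
                exact Fin.lt_def.2 (by omega)
              · exact (htrans _ _ hane hπcne).2 (Equiv.Perm.sameCycle_apply_right.2 hac)
              · exact (htrans _ _ hbne hdne).2 hbd
              · intro h
                exact hnab ((htrans _ _ hane hbne).1 h)
            · by_cases hjd : d = j
              · subst hjd
                have hane : a ≠ d := Fin.ne_of_val_ne (by omega)
                have hbne : b ≠ d := Fin.ne_of_val_ne (by omega)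
                have hcne : c ≠ d := Fin.ne_of_val_ne (by omega)
                have hπdne : π d ≠ d := hπjne
                by_cases hlast : d.val < m' + 1
                · have hπdv : (π d).val = d.val + 1 := by
                    rw [hπjval, if_pos hlast]
                  refine ⟨a, b, c, π d, hab, hbc, ?_, ?_, ?_, ?_⟩
                  · exact Fin.lt_def.2 (by omega)
                  · exact (htrans _ _ hane hcne).2 hac
                  · exact (htrans _ _ hbne hπdne).2 (Equiv.Perm.sameCycle_apply_right.2 hbd)
                  · intro h
                    exact hnab ((htrans _ _ hane hbne).1 h)
                · have hπdv : (π d).val = 0 := by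
                    rw [hπjval, if_neg hlast]
                  have hπda : π d ≠ a := by
                    intro h
                    exact hnab (((h ▸ hjj1).symm).trans hbd.symm)
                  refine ⟨π d, a, b, c, ?_, hab, hbc, ?_, ?_, ?_⟩
                  · have hv : (π d).val ≠ a.val := fun h => hπda (Fin.ext h)
                    exact Fin.lt_def.2 (by omega)
                  · exact (htrans _ _ hπdne hbne).2
                      (Equiv.Perm.sameCycle_apply_left.2 hbd.symm)
                  · exact (htrans _ _ hane hcne).2 hac
                  · intro h
                    have h1 : π.SameCycle (π d) a := (htrans _ _ hπdne hane).1 h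
                    have h2 : π.SameCycle d a := Equiv.Perm.sameCycle_apply_left.1 h1
                    exact hnab (h2.symm.trans hbd.symm)
              · -- none of a,b,c,d equals j
                refine ⟨a, b, c, d, hab, hbc, hcd, ?_, ?_, ?_⟩
                · exact (htrans _ _ hja hjc).2 hac
                · exact (htrans _ _ hjb hjd).2 hbd
                · intro h
                  exact hnab ((htrans _ _ hja hjb).1 h)
      exact keyfp m' IH' (Equiv.swap j (π j) * π) hcount'' j hfix'' hcr''


section Parabolic
variable {n : ℕ}

lemma simpleGen_isSwap (j : Fin n) : (simpleGen n j).IsSwap :=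
  ⟨j.castSucc, j.succ, by
    intro h
    have : (j.castSucc : ℕ) = (j.succ : ℕ) := congrArg Fin.val h
    simp [Fin.val_succ] at this, rfl⟩

lemma simpleGen_val (j : Fin n) (x : Fin (n+1)) :
    ((simpleGen n j) x).val =
      if x.val = j.val then j.val + 1 else if x.val = j.val + 1 then j.val else x.val := by
  have hcs : (j.castSucc : ℕ) = j.val := rfl
  have hsu : (j.succ : ℕ) = j.val + 1 := rfl
  rw [simpleGen]
  rcases eq_or_ne x j.castSucc with rfl | h1
  · rw [Equiv.swap_apply_left, hsu, hcs, if_pos rfl]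
  · rcases eq_or_ne x j.succ with rfl | h2
    · rw [Equiv.swap_apply_right, hcs, hsu]
      split_ifs <;> omega
    · rw [Equiv.swap_apply_of_ne_of_ne h1 h2,
        if_neg (fun h => h1 (Fin.ext (by rw [h, hcs]))),
        if_neg (fun h => h2 (Fin.ext (by rw [h, hsu])))]

lemma closure_preserves {i : Fin n} {π : Perm (Fin (n+1))}
    (hπ : π ∈ Subgroup.closure (simpleGen n '' {j | j ≠ i})) :
    ∀ x : Fin (n+1), (π x).val ≤ i.val ↔ x.val ≤ i.val := by
  induction hπ using Subgroup.closure_induction with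
  | mem f hf =>
    obtain ⟨j, hj, rfl⟩ := hf
    intro x
    have hji : j.val ≠ i.val := fun h => hj (Fin.ext h)
    rw [simpleGen_val]
    split_ifs <;> omega
  | one => intro x; rfl
  | mul f g hf hg ihf ihg =>
    intro x
    rw [Equiv.Perm.mul_apply]
    exact (ihf (g x)).trans (ihg x)
  | inv f hf ihf =>
    intro x
    have := ihf (f⁻¹ x)
    rw [Equiv.Perm.apply_inv_self] at this
    exact this.symm

lemma swap_mem_closure (i : Fin n) :
    ∀ (k : ℕ) (u v : Fin (n+1)), v.val - u.val ≤ k → u.val < v.val →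
      (u.val ≤ i.val ↔ v.val ≤ i.val) →
      Equiv.swap u v ∈ Subgroup.closure (simpleGen n '' {j | j ≠ i}) := by
  intro k
  induction k with
  | zero => intro u v h1 h2 _; exact absurd h1 (by omega)
  | succ k ih =>
    intro u v h1 h2 hblock
    have hv := v.isLt
    by_cases hadj : v.val = u.val + 1
    · have hun : u.val < n := by omega
      set j : Fin n := ⟨u.val, hun⟩ with hj
      have hblock' : (u.val ≤ i.val ∧ v.val ≤ i.val) ∨ (i.val < u.val ∧ i.val < v.val) := by
        rcases le_or_gt u.val i.val with h | h
        · exact Or.inl ⟨h, hblock.1 h⟩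
        · refine Or.inr ⟨h, ?_⟩
          by_contra hc
          push_neg at hc
          have := hblock.2 hc
          omega
      have hjv : j.val = u.val := rfl
      have hji : j ≠ i := by
        intro h
        have h5 : j.val = i.val := congrArg Fin.val h
        omega
      have huc : u = j.castSucc := Fin.ext rfl
      have hvs : v = j.succ := Fin.ext (by rw [hadj]; rfl)
      rw [huc, hvs]
      exact Subgroup.subset_closure ⟨j, hji, rfl⟩
    · have hgap : u.val + 1 < v.val := by omega
      set w : Fin (n+1) := ⟨v.val - 1, by omega⟩ with hw
      have hwv : w.val = v.val - 1 := rfl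
      have huw : u ≠ w := Fin.ne_of_val_ne (by omega)
      have huv : u ≠ v := Fin.ne_of_val_ne (by omega)
      have hblock1 : (u.val ≤ i.val ↔ w.val ≤ i.val) := by
        rw [hwv]
        rcases hblock with ⟨hf, hb⟩
        constructor <;> intro hh
        · by_contra hcon
          push_neg at hcon
          have : ¬ v.val ≤ i.val := by omega
          exact this (hf hh)
        · omega
      have hblock2 : (w.val ≤ i.val ↔ v.val ≤ i.val) := by
        rw [hwv]
        rcases hblock with ⟨hf, hb⟩
        constructor <;> intro hh
        · by_contra hcon
          push_neg at hcon
          have h3 : ¬ u.val ≤ i.val := by omega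
          have h4 : ¬ v.val ≤ i.val := fun hc => h3 (hb hc)
          omega
        · omega
      have hm1 : Equiv.swap u w ∈ Subgroup.closure (simpleGen n '' {j | j ≠ i}) :=
        ih u w (by omega) (by omega) hblock1
      have hm2 : Equiv.swap w v ∈ Subgroup.closure (simpleGen n '' {j | j ≠ i}) :=
        ih w v (by omega) (by omega) hblock2
      have hiden : Equiv.swap w v * Equiv.swap u w * Equiv.swap w v = Equiv.swap v u :=
        Equiv.swap_mul_swap_mul_swap huw huv
      have : Equiv.swap u v = Equiv.swap w v * Equiv.swap u w * Equiv.swap w v := by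
        rw [hiden, Equiv.swap_comm]
      rw [this]
      exact Subgroup.mul_mem _ (Subgroup.mul_mem _ hm2 hm1) hm2

lemma preserves_mem_closure {i : Fin n} {π : Perm (Fin (n+1))}
    (hπ : ∀ x : Fin (n+1), x.val ≤ i.val → (π x).val ≤ i.val) :
    π ∈ Subgroup.closure (simpleGen n '' {j | j ≠ i}) := by
  have hiff : ∀ x : Fin (n+1), (π x).val ≤ i.val ↔ x.val ≤ i.val := by
    have himg : (univ.filter (fun x : Fin (n+1) => x.val ≤ i.val)).image π
        = univ.filter (fun x => x.val ≤ i.val) := by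
      apply Finset.eq_of_subset_of_card_le
      · intro y hy
        rw [Finset.mem_image] at hy
        obtain ⟨x, hx, rfl⟩ := hy
        rw [Finset.mem_filter] at hx ⊢
        exact ⟨mem_univ _, hπ x hx.2⟩
      · rw [Finset.card_image_of_injective _ π.injective]
    intro x
    constructor
    · intro h
      have hmem : π x ∈ (univ.filter (fun x : Fin (n+1) => x.val ≤ i.val)).image π := by
        rw [himg, Finset.mem_filter]
        exact ⟨mem_univ _, h⟩
      rw [Finset.mem_image] at hmem
      obtain ⟨x', hx', hxe⟩ := hmem
      have := π.injective hxe
      subst this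
      rw [Finset.mem_filter] at hx'
      exact hx'.2
    · exact hπ x
  have hS : ∀ f ∈ simpleGen n '' {j | j ≠ i}, f.IsSwap := by
    rintro f ⟨j, -, rfl⟩
    exact simpleGen_isSwap j
  rw [mem_closure_isSwap hS]
  refine ⟨Set.toFinite _, ?_⟩
  intro x
  by_cases hfx : π x = x
  · rw [hfx]
    exact MulAction.mem_orbit_self x
  · have hblock : ((π x).val ≤ i.val ↔ x.val ≤ i.val) := hiff x
    have hswapmem : Equiv.swap (π x) x ∈ Subgroup.closure (simpleGen n '' {j | j ≠ i}) := by
      rcases lt_or_gt_of_ne (fun h => hfx (Fin.ext h) :  (π x).val ≠ x.val) with h | h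
      · exact swap_mem_closure i (x.val - (π x).val) (π x) x le_rfl h hblock
      · rw [Equiv.swap_comm]
        exact swap_mem_closure i ((π x).val - x.val) x (π x) le_rfl h hblock.symm
    exact MulAction.mem_orbit_iff.2 ⟨⟨Equiv.swap (π x) x, hswapmem⟩,
      by simp [Equiv.Perm.smul_def]⟩

end Parabolic

end NCAux

open NCAux

/-- A noncrossing partition of the Coxeter group of type `Aₙ` (an element
`π ≤_T c` of `S_{n+1}`) is positive, i.e. not contained in any proper standard
parabolic subgroup `W_{S \ {sᵢ}}`, if and only if in the corresponding classical
noncrossing partition of `{1, …, n+1}` (given by the cycles of `π`) the elements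
`1` and `n+1` lie in the same block, i.e. in the same cycle of `π`. -/
theorem stmt0 (n : ℕ) (π : Equiv.Perm (Fin (n + 1))) (hπ : absLe π (coxeterA n)) :
    (∀ i : Fin n, π ∉ Subgroup.closure (simpleGen n '' {j | j ≠ i})) ↔
      π.SameCycle 0 (Fin.last n) := by
  have hlastval : (Fin.last n).val = n := rfl
  constructor
  · intro hpos
    by_contra hnsc
    have hcount := count_of_absLe hπ
    set O := (Finset.univ : Finset (Fin (n+1))).filter (fun z => π.SameCycle 0 z) with hO
    have hO0 : (0 : Fin (n+1)) ∈ O := by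
      rw [hO, Finset.mem_filter]
      exact ⟨Finset.mem_univ _, Equiv.Perm.SameCycle.refl _ _⟩
    have hOne : O.Nonempty := ⟨0, hO0⟩
    set mx := O.max' hOne with hmx
    have hmxO : mx ∈ O := O.max'_mem _
    have hmxsc : π.SameCycle 0 mx := (Finset.mem_filter.1 hmxO).2
    have hmxlast : mx ≠ Fin.last n := fun h => hnsc (h ▸ hmxsc)
    have hmxval : mx.val < n := by
      have h1 := mx.isLt
      have h2 : mx.val ≠ n := fun h => hmxlast (Fin.ext (by rw [h, hlastval]))
      omega
    refine hpos ⟨mx.val, hmxval⟩ (preserves_mem_closure ?_)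
    intro x hx
    by_contra hgt
    push_neg at hgt
    have hx' : x.val ≤ mx.val := hx
    have hgt' : mx.val < (π x).val := hgt
    by_cases hxO : π.SameCycle 0 x
    · have hπxO : π x ∈ O := by
        rw [hO, Finset.mem_filter]
        exact ⟨Finset.mem_univ _, Equiv.Perm.sameCycle_apply_right.2 hxO⟩
      have hle : π x ≤ mx := O.le_max' _ hπxO
      have h6 : (π x).val ≤ mx.val := hle
      exact absurd h6 (by omega)
    · have hx0 : 0 < x.val := by
        rcases Nat.eq_zero_or_pos x.val with h0 | h
        · exfalso
          apply hxO
          have h7 : x = 0 := Fin.ext (by rw [h0]; exact rfl)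
          rw [h7]
        · exact h
      have hxmx : x.val < mx.val := by
        have h5 : x.val ≠ mx.val := by
          intro h
          apply hxO
          have h8 : x = mx := Fin.ext h
          rw [h8]
          exact hmxsc
        omega
      exact noncross n π hcount ⟨0, x, mx, π x, Fin.lt_def.2 hx0, Fin.lt_def.2 hxmx,
        Fin.lt_def.2 hgt', hmxsc,
        Equiv.Perm.sameCycle_apply_right.2 (Equiv.Perm.SameCycle.refl π x), hxO⟩
  · intro hsc i hmem
    have hiff := closure_preserves hmem
    have hpow : ∀ k : ℕ, ((π ^ k) 0).val ≤ i.val := by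
      intro k
      induction k with
      | zero => simp
      | succ k ih =>
        rw [pow_succ', Equiv.Perm.mul_apply]
        exact (hiff _).2 ih
    obtain ⟨k, hk⟩ := sameCycle_nat hsc
    have h9 := hpow k
    rw [hk] at h9
    have h2 := i.isLt
    rw [hlastval] at h9
    omega
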